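/- Let K be a number field with ring of integers 𝒪_K, let I ⊆ 𝒪_K be a nonzero ideal, and let n be the positive integer such that I ∩ ℤ = nℤ. Then 𝒪_K/I is a finite symmetric ℤ/n-algebra. -/

import Mathlib

open NumberField

set_option synthInstance.maxHeartbeats 1000000
set_option maxHeartbeats 1000000

lemma exists_hom_zmod_of_dvd {m n : ℕ} (hn : 0 < n) (hmn : m ∣ n) {c : ZMod m}
    (hc : c ≠ 0) : ∃ g : ZMod m →+ ZMod n, g c ≠ 0 := by
  have hm : 0 < m := Nat.pos_of_dvd_of_pos hmn hn
  haveI : NeZero m := ⟨hm.ne'⟩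
  haveI : NeZero n := ⟨hn.ne'⟩
  set d : ℕ := n / m with hd
  have hdm : m * d = n := Nat.mul_div_cancel' hmn
  have hsm : ∀ k : ℕ, ((k : ℤ)) • ((d : ℕ) : ZMod n) = (((k * d : ℕ) : ℤ) : ZMod n) := by
    intro k; rw [zsmul_eq_mul]; push_cast; ring
  have hf : (zmultiplesHom (ZMod n) ((d : ZMod n))) (m : ℤ) = 0 := by
    simp only [zmultiplesHom_apply]
    rw [hsm m, hdm]
    exact_mod_cast (ZMod.natCast_eq_zero_iff n n).mpr dvd_rfl
  refine ⟨ZMod.lift m ⟨zmultiplesHom (ZMod n) ((d : ZMod n)), hf⟩, ?_⟩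
  have hcval : ((c.val : ℤ) : ZMod m) = c := by
    push_cast
    simp [ZMod.natCast_val, ZMod.cast_id]
  rw [← hcval, ZMod.lift_coe]
  simp only [zmultiplesHom_apply]
  rw [hsm c.val]
  intro h0
  have hdvd : n ∣ c.val * d := by
    exact_mod_cast (ZMod.natCast_eq_zero_iff _ n).mp (by exact_mod_cast h0)
  have hvpos : 0 < c.val := Nat.pos_of_ne_zero fun h => hc ((ZMod.val_eq_zero c).mp h)
  have hdpos : 0 < d := Nat.div_pos (Nat.le_of_dvd hn hmn) hm
  have hlt : c.val * d < n := by
    calc c.val * d < m * d := (Nat.mul_lt_mul_right hdpos).mpr (ZMod.val_lt c)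
    _ = n := hdm
  exact absurd (Nat.le_of_dvd (Nat.mul_pos hvpos hdpos) hdvd) (not_le.mpr hlt)

lemma exists_char {A : Type*} [AddCommGroup A] [Finite A] {n : ℕ} (hn : 0 < n)
    (htor : ∀ x : A, n • x = 0) {a : A} (ha : a ≠ 0) :
    ∃ χ : A →+ ZMod n, χ a ≠ 0 := by
  classical
  obtain ⟨ι, hι, m, hm, ⟨e⟩⟩ := AddCommGroup.equiv_directSum_zmod_of_finite' A
  have hea : e a ≠ 0 := fun h => ha (by simpa using congrArg e.symm h)
  have : ∃ i, e a i ≠ 0 := by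
    by_contra h
    push_neg at h
    exact hea (DFinsupp.ext h)
  obtain ⟨i, hi⟩ := this
  haveI : NeZero (m i) := ⟨by have := hm i; omega⟩
  have hmn : m i ∣ n := by
    have h1 : DirectSum.of (fun j => ZMod (m j)) i ((n • 1 : ZMod (m i))) = 0 := by
      rw [map_nsmul]
      have := htor (e.symm (DirectSum.of (fun j => ZMod (m j)) i 1))
      have h2 := congrArg e this
      rwa [map_nsmul, e.apply_symm_apply, map_zero] at h2
    have h3 := congrArg (fun f => f i) h1
    simp only [DirectSum.of_eq_same] at h3
    rw [nsmul_eq_mul, mul_one] at h3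
    exact (ZMod.natCast_eq_zero_iff n (m i)).mp (by exact_mod_cast h3)
  obtain ⟨g, hg⟩ := exists_hom_zmod_of_dvd hn hmn hi
  refine ⟨(g.comp ((DFinsupp.evalAddMonoidHom i).comp e.toAddMonoidHom)), ?_⟩
  exact hg

/-- Let `K` be a number field with ring of integers `𝒪_K`, `I ⊆ 𝒪_K` a nonzero ideal, and
`n` the positive integer with `I ∩ ℤ = nℤ`. Then `𝒪_K/I` is a finite symmetric
`ZMod n`-algebra. -/
theorem numberField_quotient_symmetric (K : Type*) [Field K] [NumberField K]
    (I : Ideal (𝓞 K)) (hI : I ≠ ⊥) (n : ℕ) (hn : 0 < n)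
    (hnI : Ideal.comap (algebraMap ℤ (𝓞 K)) I = Ideal.span {(n : ℤ)}) :
    Finite ((𝓞 K) ⧸ I) ∧
    ∃ ψ : ((𝓞 K) ⧸ I) →+ ZMod n,
      ∀ J : Ideal ((𝓞 K) ⧸ I), (∀ x ∈ J, ψ x = 0) → J = ⊥ := by
  classical
  haveI : Finite ((𝓞 K) ⧸ I) := Ideal.finiteQuotientOfFreeOfNeBot I hI
  refine ⟨inferInstance, ?_⟩
  -- n lies in I
  have hnmem : ((n : ℕ) : 𝓞 K) ∈ I := by
    have h1 : ((n : ℤ)) ∈ Ideal.span {(n : ℤ)} := Ideal.mem_span_singleton_self _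
    rw [← hnI, Ideal.mem_comap] at h1
    simpa using h1
  -- CRT data
  set ι := (UniqueFactorizationMonoid.factors I).toFinset with hι
  set eP : ι → ℕ := fun P => Multiset.count (P : Ideal (𝓞 K)) (UniqueFactorizationMonoid.factors I) with heP
  have hprime : ∀ P : ι, Prime (P : Ideal (𝓞 K)) := fun P =>
    UniqueFactorizationMonoid.prime_of_factor _ (Multiset.mem_toFinset.mp P.2)
  have hP0 : ∀ P : ι, (P : Ideal (𝓞 K)) ≠ ⊥ := fun P => (hprime P).ne_zero
  have hP1 : ∀ P : ι, (P : Ideal (𝓞 K)) ≠ ⊤ := fun P => fun h =>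
    (hprime P).not_unit (by rw [Ideal.isUnit_iff]; exact h)
  have hepos : ∀ P : ι, 0 < eP P := fun P =>
    Multiset.count_pos.mpr (Multiset.mem_toFinset.mp P.2)
  have hIle : ∀ P : ι, I ≤ (P : Ideal (𝓞 K)) ^ eP P := by
    intro P
    rw [← Ideal.dvd_iff_le]
    have hprod : (UniqueFactorizationMonoid.factors I).prod = I :=
      associated_iff_eq.mp (UniqueFactorizationMonoid.factors_prod hI)
    rw [← hprod, ← Multiset.prod_replicate]
    exact Multiset.prod_dvd_prod_of_le (Multiset.le_count_iff_replicate_le.mp le_rfl)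
  -- per-factor data: element contained in every nonzero ideal, and a character
  have key : ∀ P : ι, ∃ (t : (𝓞 K) ⧸ ((P : Ideal (𝓞 K)) ^ eP P))
      (χ : ((𝓞 K) ⧸ ((P : Ideal (𝓞 K)) ^ eP P)) →+ ZMod n),
      χ t ≠ 0 ∧ ∀ J : Ideal ((𝓞 K) ⧸ ((P : Ideal (𝓞 K)) ^ eP P)), J ≠ ⊥ → t ∈ J := by
    intro P
    haveI := Ideal.isPrime_of_prime (hprime P)
    obtain ⟨s, hs1, hs2⟩ :=
      Ideal.exists_mem_pow_notMem_pow_succ (P : Ideal (𝓞 K)) (hP0 P) (hP1 P) (eP P - 1)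
    rw [Nat.sub_add_cancel (hepos P)] at hs2
    set Q : Ideal (𝓞 K) := (P : Ideal (𝓞 K)) ^ eP P with hQ
    have hQbot : Q ≠ ⊥ := pow_ne_zero _ (hP0 P)
    haveI : Finite ((𝓞 K) ⧸ Q) := Ideal.finiteQuotientOfFreeOfNeBot Q hQbot
    have htor : ∀ x : ((𝓞 K) ⧸ Q), n • x = 0 := by
      intro x
      have hnQ : ((n : ℕ) : 𝓞 K) ∈ Q := hIle P hnmem
      rw [nsmul_eq_mul]
      have : ((n : ℕ) : (𝓞 K) ⧸ Q) = 0 := by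
        rw [← map_natCast (Ideal.Quotient.mk Q) n, Ideal.Quotient.eq_zero_iff_mem]
        exact hnQ
      rw [this, zero_mul]
    have hsbar : (Ideal.Quotient.mk Q s) ≠ 0 := by
      rw [Ne, Ideal.Quotient.eq_zero_iff_mem]
      exact hs2
    obtain ⟨χ, hχ⟩ := exists_char hn htor hsbar
    refine ⟨Ideal.Quotient.mk Q s, χ, hχ, ?_⟩
    intro J hJ
    set J' := Ideal.comap (Ideal.Quotient.mk Q) J with hJ'
    have hQle : Q ≤ J' := by
      intro x hx
      rw [Ideal.mem_comap]
      rw [show Ideal.Quotient.mk Q x = 0 from (Ideal.Quotient.eq_zero_iff_mem).mpr hx]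
      exact J.zero_mem
    have hne : J' ≠ Q := by
      intro h
      apply hJ
      have := Ideal.map_comap_of_surjective _ Ideal.Quotient.mk_surjective J
      rw [← this, ← hJ', h, Ideal.map_quotient_self]
    obtain ⟨k, hk, hassoc⟩ := (dvd_prime_pow (hprime P) (eP P)).mp (Ideal.dvd_iff_le.mpr hQle)
    have hJk : J' = (P : Ideal (𝓞 K)) ^ k := associated_iff_eq.mp hassoc
    have hkne : k ≠ eP P := by
      intro h; exact hne (by rw [hJk, h])
    have hle' : (P : Ideal (𝓞 K)) ^ (eP P - 1) ≤ J' := by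
      rw [hJk]
      exact Ideal.pow_le_pow_right (by omega)
    have : s ∈ J' := hle' hs1
    rwa [Ideal.mem_comap] at this
  choose t χ hχ ht using key
  -- the CRT isomorphism
  set ν := IsDedekindDomain.quotientEquivPiFactors hI with hν
  refine ⟨AddMonoidHom.mk' (fun x => ∑ P : ι, χ P (ν x P)) ?_, ?_⟩
  · intro x y
    simp only [map_add, Pi.add_apply]
    rw [← Finset.sum_add_distrib]
  · intro J hJ
    by_contra hne
    obtain ⟨x, hxJ, hx0⟩ := Submodule.exists_mem_ne_zero_of_ne_bot hne
    have hνx : ν x ≠ 0 := fun h => hx0 (by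
      have := congrArg ν.symm h
      rwa [RingEquiv.symm_apply_apply, map_zero] at this)
    have : ∃ i : ι, ν x i ≠ 0 := by
      by_contra h
      push_neg at h
      exact hνx (funext h)
    obtain ⟨i, hi⟩ := this
    have hspan : Ideal.span {ν x i} ≠ ⊥ := by
      rw [Ne, Ideal.span_singleton_eq_bot]; exact hi
    have hti : t i ∈ Ideal.span {ν x i} := ht i _ hspan
    obtain ⟨r, hr⟩ := Ideal.mem_span_singleton'.mp hti
    set z := ν.symm (Pi.single i r) * x with hz
    have hzJ : z ∈ J := Ideal.mul_mem_left J _ hxJ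
    have hψz := hJ z hzJ
    rw [AddMonoidHom.mk'_apply] at hψz
    have hνz : ν z = Pi.single i r * ν x := by
      rw [hz, map_mul, RingEquiv.apply_symm_apply]
    rw [hνz] at hψz
    simp only [Pi.mul_apply] at hψz
    rw [Finset.sum_eq_single i
      (fun b _ hbi => by rw [Pi.single_eq_of_ne hbi, zero_mul, map_zero])
      (fun h => absurd (Finset.mem_univ i) h)] at hψz
    rw [Pi.single_eq_same, hr] at hψz
    exact hχ i hψz
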